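/- arXiv:1601.03965 — 3 statements merged into one kernel-verified Lean document; each statement's English description precedes it below -/
import Mathlib

section
/- Let 0 < α < 1 and define K_α : (0,∞) → ℝ by K_α(r) = (1/π) · r^{α-1} sin(απ) / (r^{2α} + 2 r^α cos(απ) + 1). Then K_α(r) > 0 for all r > 0 and ∫_0^∞ K_α(r) dr = 1, so K_α is a probability density on (0,∞). -/
open MeasureTheory Set

/-- K_α is a probability density on (0,∞). -/
theorem Kalpha_probability_density
    (α : ℝ) (hα : α ∈ Set.Ioo (0 : ℝ) 1)
    (K : ℝ → ℝ)
    (hK : ∀ r : ℝ, 0 < r →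
      K r = (1 / Real.pi) * (r ^ (α - 1) * Real.sin (α * Real.pi)) /
        (r ^ (2 * α) + 2 * r ^ α * Real.cos (α * Real.pi) + 1)) :
    (∀ r : ℝ, 0 < r → 0 < K r) ∧ (∫ r in Set.Ioi (0 : ℝ), K r) = 1 := by
  obtain ⟨hα0, hα1⟩ := hα
  set θ := α * Real.pi with hθdef
  have hθ0 : 0 < θ := mul_pos hα0 Real.pi_pos
  have hθπ : θ < Real.pi := by
    calc θ < 1 * Real.pi := by
            exact mul_lt_mul_of_pos_right hα1 Real.pi_pos
      _ = Real.pi := one_mul _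
  set s := Real.sin θ with hsdef
  set c := Real.cos θ with hcdef
  have hs : 0 < s := Real.sin_pos_of_pos_of_lt_pi hθ0 hθπ
  have hcs : c ^ 2 + s ^ 2 = 1 := by
    rw [hsdef, hcdef]; exact Real.cos_sq_add_sin_sq θ
  -- denominator rewriting
  have hden : ∀ r : ℝ, 0 < r →
      r ^ (2 * α) + 2 * r ^ α * c + 1 = (r ^ α + c) ^ 2 + s ^ 2 := by
    intro r hr
    have h2 : r ^ (2 * α) = r ^ α * r ^ α := by
      rw [two_mul, Real.rpow_add hr]
    rw [h2]; nlinarith [hcs]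
  have hdenpos : ∀ u : ℝ, 0 < (u + c) ^ 2 + s ^ 2 := by
    intro u
    have : 0 < s ^ 2 := pow_pos hs 2
    nlinarith [sq_nonneg (u + c)]
  -- positivity
  have hpos : ∀ r : ℝ, 0 < r → 0 < K r := by
    intro r hr
    rw [hK r hr]
    apply div_pos
    · apply mul_pos
      · positivity
      · exact mul_pos (Real.rpow_pos_of_pos hr _) hs
    · rw [hden r hr]
      have h := hdenpos (r ^ α)
      linarith [h]
  refine ⟨hpos, ?_⟩
  -- the key one-dimensional integral
  set g : ℝ → ℝ := fun u => ((u + c) ^ 2 + s ^ 2)⁻¹ with hgdef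
  have harctan : Real.arctan (c / s) = Real.pi / 2 - θ := by
    have h1 : c / s = Real.tan (Real.pi / 2 - θ) := by
      rw [Real.tan_eq_sin_div_cos, Real.sin_pi_div_two_sub, Real.cos_pi_div_two_sub]
    rw [h1, Real.arctan_tan (by linarith) (by linarith)]
  have hint_g : (∫ u in Set.Ioi (0 : ℝ), g u) = θ / s := by
    set F : ℝ → ℝ := fun u => s⁻¹ * Real.arctan ((u + c) / s) with hFdef
    have hderiv : ∀ u : ℝ, HasDerivAt F (g u) u := by
      intro u
      have h1 : HasDerivAt (fun u : ℝ => (u + c) / s) (1 / s) u := by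
        have := ((hasDerivAt_id u).add_const c).div_const s
        simpa using this
      have h2 := (Real.hasDerivAt_arctan ((u + c) / s)).comp u h1
      have h3 := h2.const_mul s⁻¹
      refine h3.congr_deriv ?_
      symm
      rw [hgdef]
      have hd := hdenpos u
      field_simp
      ring
    have htends : Filter.Tendsto F Filter.atTop (nhds (s⁻¹ * (Real.pi / 2))) := by
      apply Filter.Tendsto.const_mul
      have h1 : Filter.Tendsto (fun u : ℝ => (u + c) / s) Filter.atTop Filter.atTop := by
        apply Filter.Tendsto.atTop_div_const hs
        exact Filter.tendsto_atTop_add_const_right _ c Filter.tendsto_id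
      exact (Real.tendsto_arctan_atTop.mono_right nhdsWithin_le_nhds).comp h1
    have h0 : ∀ u ∈ Set.Ioi (0:ℝ), 0 ≤ g u := by
      intro u _; exact le_of_lt (inv_pos.mpr (hdenpos u))
    have := integral_Ioi_of_hasDerivAt_of_nonneg' (g := F) (g' := g) (a := 0)
      (fun x _ => hderiv x) h0 htends
    rw [this, hFdef]
    simp only [zero_add]
    rw [harctan]
    field_simp
    ring
  -- substitution r ↦ r^α
  have hsub : (∫ r in Set.Ioi (0:ℝ), (α * r ^ (α - 1)) • g (r ^ α)) = ∫ u in Set.Ioi (0:ℝ), g u :=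
    integral_comp_rpow_Ioi_of_pos hα0
  have hcongr : (∫ r in Set.Ioi (0:ℝ), K r)
      = ∫ r in Set.Ioi (0:ℝ), (s / (Real.pi * α)) * ((α * r ^ (α - 1)) • g (r ^ α)) := by
    apply setIntegral_congr_fun measurableSet_Ioi
    intro r hr
    rw [hK r hr, hden r hr]
    rw [hgdef]
    simp only [smul_eq_mul]
    have hd := hdenpos (r ^ α)
    have hπ := Real.pi_pos
    field_simp
  rw [hcongr]
  simp only [smul_eq_mul] at hsub ⊢
  rw [MeasureTheory.integral_const_mul, hsub, hint_g, hθdef]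
  have hπ := Real.pi_pos
  field_simp
end

section
/- Let λ : [0,∞) → [0,∞) be continuous with Λ(t) = ∫_0^t λ(u) du, and let n ≥ 1 be an integer. Let Y be a non-negative random variable on a probability space. Then Σ_{x=n}^{∞} E[ e^{-Λ(Y)} Λ(Y)^x / x! ] = ∫_0^∞ P(Y > u) · λ(u) e^{-Λ(u)} Λ(u)^{n-1} / (n-1)! du. In particular, when Y = Y_α(t) this gives the distribution function P(T_n ≤ t) of the n-th arrival time T_n of the fractional non-homogeneous Poisson process, generalizing the Erlang distribution. -/
open MeasureTheory ProbabilityTheory Set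


open MeasureTheory ProbabilityTheory Set

noncomputable def Spoly (m : ℕ) (s : ℝ) : ℝ := ∑ x ∈ Finset.range m, s ^ x / x.factorial

lemma Spoly_hasDerivAt (m : ℕ) (s : ℝ) : HasDerivAt (Spoly (m + 1)) (Spoly m s) s := by
  induction m with
  | zero =>
    have h1 : Spoly 1 = fun _ : ℝ => (1 : ℝ) := by funext t; simp [Spoly]
    have h0 : Spoly 0 s = 0 := by simp [Spoly]
    rw [h1, h0]; exact hasDerivAt_const s 1
  | succ m ih =>
    have h1 : HasDerivAt (fun s : ℝ => s ^ (m + 1) / (m + 1).factorial)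
        (s ^ m / m.factorial) s := by
      have := (hasDerivAt_pow (m + 1) s).div_const ((m + 1).factorial : ℝ)
      refine this.congr_deriv (Eq.symm ?_)
      rw [Nat.factorial_succ, Nat.add_sub_cancel]; push_cast
      field_simp [Nat.factorial_succ]
    have e1 : Spoly (m + 1 + 1) = fun t => Spoly (m + 1) t + t ^ (m + 1) / (m + 1).factorial := by
      funext t; simp [Spoly, Finset.sum_range_succ]
    have e2 : Spoly (m + 1) s = Spoly m s + s ^ m / m.factorial := by
      simp [Spoly, Finset.sum_range_succ]
    rw [e1, e2]
    exact ih.add h1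

lemma Spoly_zero (m : ℕ) : Spoly (m + 1) 0 = 1 := by
  rw [Spoly, Finset.sum_eq_single 0]
  · simp
  · intro x _ hne; simp [zero_pow hne]
  · simp

lemma integral_gamma_eq (m : ℕ) (r : ℝ) :
    ∫ s in (0:ℝ)..r, Real.exp (-s) * s ^ m / m.factorial
      = 1 - Real.exp (-r) * Spoly (m + 1) r := by
  have hF : ∀ s : ℝ, HasDerivAt (fun s => -(Real.exp (-s) * Spoly (m + 1) s))
      (Real.exp (-s) * s ^ m / m.factorial) s := by
    intro s
    have he : HasDerivAt (fun s : ℝ => Real.exp (-s)) (-Real.exp (-s)) s := by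
      simpa using ((hasDerivAt_neg s).exp)
    have := (he.mul (Spoly_hasDerivAt m s)).neg
    refine this.congr_deriv (Eq.symm ?_)
    have hS : Spoly (m + 1) s - Spoly m s = s ^ m / m.factorial := by
      simp [Spoly, Finset.sum_range_succ]
    linear_combination -Real.exp (-s) * hS
  have hc : Continuous fun s : ℝ => Real.exp (-s) * s ^ m / m.factorial := by
    continuity
  have := intervalIntegral.integral_eq_sub_of_hasDerivAt
    (f := fun s => -(Real.exp (-s) * Spoly (m + 1) s))
    (fun x _ => hF x) (hc.intervalIntegrable 0 r)
  rw [this]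
  simp [Spoly_zero m]
  ring

lemma poisson_tail (m : ℕ) (r : ℝ) :
    ∑' k : ℕ, Real.exp (-r) * r ^ (m + 1 + k) / ((m + 1 + k).factorial)
      = ∫ s in (0:ℝ)..r, Real.exp (-s) * s ^ m / m.factorial := by
  have hsum : Summable (fun x : ℕ => Real.exp (-r) * r ^ x / x.factorial) := by
    simpa [mul_div_assoc] using (Real.summable_pow_div_factorial r).mul_left (Real.exp (-r))
  have htot : ∑' x : ℕ, Real.exp (-r) * r ^ x / x.factorial = 1 := by
    have : ∑' x : ℕ, Real.exp (-r) * (r ^ x / x.factorial)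
        = Real.exp (-r) * ∑' x : ℕ, r ^ x / x.factorial := tsum_mul_left
    have hexp : ∑' x : ℕ, r ^ x / (x.factorial : ℝ) = Real.exp r := by
      rw [Real.exp_eq_exp_ℝ, NormedSpace.exp_eq_tsum_div]
    simp only [mul_div_assoc]
    rw [this, hexp, ← Real.exp_add]
    simp
  have := Summable.sum_add_tsum_nat_add (f := fun x : ℕ => Real.exp (-r) * r ^ x / x.factorial)
    (m + 1) hsum
  rw [htot] at this
  have htail : ∑' k : ℕ, Real.exp (-r) * r ^ (k + (m + 1)) / ((k + (m + 1)).factorial)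
      = 1 - ∑ x ∈ Finset.range (m + 1), Real.exp (-r) * r ^ x / x.factorial := by
    linarith [this]
  rw [integral_gamma_eq]
  calc ∑' k : ℕ, Real.exp (-r) * r ^ (m + 1 + k) / ((m + 1 + k).factorial)
      = ∑' k : ℕ, Real.exp (-r) * r ^ (k + (m + 1)) / ((k + (m + 1)).factorial) := by
        apply tsum_congr; intro k; rw [add_comm]
    _ = 1 - ∑ x ∈ Finset.range (m + 1), Real.exp (-r) * r ^ x / x.factorial := htail
    _ = 1 - Real.exp (-r) * Spoly (m + 1) r := by
        congr 1
        simp [Spoly, Finset.mul_sum, mul_div_assoc]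

lemma poisson_summable_tail (m : ℕ) (r : ℝ) :
    Summable (fun k : ℕ => Real.exp (-r) * r ^ (m + 1 + k) / ((m + 1 + k).factorial)) := by
  have hsum : Summable (fun x : ℕ => Real.exp (-r) * r ^ x / x.factorial) := by
    simpa [mul_div_assoc] using (Real.summable_pow_div_factorial r).mul_left (Real.exp (-r))
  exact hsum.comp_injective (fun a b h => by omega)

lemma poisson_tail_le_one (m : ℕ) (r : ℝ) (hr : 0 ≤ r) :
    ∑' k : ℕ, Real.exp (-r) * r ^ (m + 1 + k) / ((m + 1 + k).factorial) ≤ 1 := by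
  have hsum : Summable (fun x : ℕ => Real.exp (-r) * r ^ x / x.factorial) := by
    simpa [mul_div_assoc] using (Real.summable_pow_div_factorial r).mul_left (Real.exp (-r))
  have htot : ∑' x : ℕ, Real.exp (-r) * r ^ x / x.factorial = 1 := by
    have h1 : ∑' x : ℕ, Real.exp (-r) * (r ^ x / x.factorial)
        = Real.exp (-r) * ∑' x : ℕ, r ^ x / x.factorial := tsum_mul_left
    have hexp : ∑' x : ℕ, r ^ x / (x.factorial : ℝ) = Real.exp r := by
      rw [Real.exp_eq_exp_ℝ, NormedSpace.exp_eq_tsum_div]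
    simp only [mul_div_assoc]
    rw [h1, hexp, ← Real.exp_add]
    simp
  have hadd := Summable.sum_add_tsum_nat_add (f := fun x : ℕ => Real.exp (-r) * r ^ x / x.factorial)
    (m + 1) hsum
  rw [htot] at hadd
  have hre : ∑' k : ℕ, Real.exp (-r) * r ^ (m + 1 + k) / ((m + 1 + k).factorial)
      = ∑' k : ℕ, Real.exp (-r) * r ^ (k + (m + 1)) / ((k + (m + 1)).factorial) := by
    apply tsum_congr; intro k; rw [add_comm]
  have hhead : 0 ≤ ∑ x ∈ Finset.range (m + 1), Real.exp (-r) * r ^ x / x.factorial := by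
    apply Finset.sum_nonneg
    intro x _
    positivity
  rw [hre]
  linarith

open scoped ENNReal


/-- distribution of the arrival times of the fractional
non-homogeneous Poisson process (generalized Erlang distribution):
Σ_{x=n}^∞ E[e^{-Λ(Y)} Λ(Y)^x / x!] = ∫_0^∞ P(Y > u) λ(u) e^{-Λ(u)} Λ(u)^{n-1}/(n-1)! du. -/
theorem fnpp_arrival_time_distribution
    {Ω : Type*} [MeasureSpace Ω] [IsProbabilityMeasure (ℙ : Measure Ω)]
    (lam : ℝ → ℝ) (hcont : ContinuousOn lam (Ici 0))
    (hnn : ∀ u : ℝ, 0 ≤ u → 0 ≤ lam u)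
    (Λ : ℝ → ℝ) (hΛ : ∀ t : ℝ, Λ t = ∫ u in (0 : ℝ)..t, lam u)
    (n : ℕ) (hn : 1 ≤ n)
    (Y : Ω → ℝ) (hYmeas : Measurable Y) (hYnn : ∀ ω, 0 ≤ Y ω) :
    ∑' k : ℕ, ∫ ω, Real.exp (-(Λ (Y ω))) * (Λ (Y ω)) ^ (n + k) / (Nat.factorial (n + k)) =
      ∫ u in Set.Ioi (0 : ℝ),
        (ℙ {ω | u < Y ω}).toReal *
          (lam u * Real.exp (-(Λ u)) * (Λ u) ^ (n - 1) / (Nat.factorial (n - 1))) := by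
  obtain ⟨m, rfl⟩ : ∃ m, n = m + 1 := ⟨n - 1, (Nat.succ_pred_eq_of_pos hn).symm⟩
  simp only [Nat.add_sub_cancel]
  -- extended intensity and cumulative intensity
  set L : ℝ → ℝ := fun u => lam (max u 0) with hLdef
  have hLcont : Continuous L :=
    hcont.comp_continuous (continuous_id.max continuous_const) (fun u => le_max_right u 0)
  have hLnn : ∀ u, 0 ≤ L u := fun u => hnn _ (le_max_right u 0)
  set Φ : ℝ → ℝ := fun t => ∫ u in (0:ℝ)..t, L u with hΦdef
  have hΦeq : ∀ t, 0 ≤ t → Φ t = Λ t := by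
    intro t ht
    rw [hΛ, hΦdef]
    apply intervalIntegral.integral_congr
    intro u hu
    rw [uIcc_of_le ht] at hu
    simp [hLdef, max_eq_left hu.1]
  have hΦderiv : ∀ x, HasDerivAt Φ (L x) x := fun x =>
    intervalIntegral.integral_hasDerivAt_right (hLcont.intervalIntegrable 0 x)
      (hLcont.stronglyMeasurableAtFilter _ _) hLcont.continuousAt
  have hΦcont : Continuous Φ := by
    rw [continuous_iff_continuousAt]; exact fun x => (hΦderiv x).continuousAt
  have hΦ0 : Φ 0 = 0 := intervalIntegral.integral_same
  have hΦnn : ∀ y, 0 ≤ y → 0 ≤ Φ y := fun y hy =>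
    intervalIntegral.integral_nonneg hy (fun u _ => hLnn u)
  set g : ℝ → ℝ := fun u => Real.exp (-(Φ u)) * (Φ u) ^ m / (m.factorial : ℝ) * L u with hgdef
  have hgcont : Continuous g := by
    exact (((Real.continuous_exp.comp hΦcont.neg).mul (hΦcont.pow m)).div_const _).mul hLcont
  have hgnn : ∀ u, 0 ≤ u → 0 ≤ g u := by
    intro u hu
    have := hΦnn u hu
    have := hLnn u
    have := Real.exp_nonneg (-(Φ u))
    positivity
  -- the key pointwise identity
  have key : ∀ y : ℝ, 0 ≤ y →
      (∑' k : ℕ, Real.exp (-(Φ y)) * (Φ y) ^ (m + 1 + k) / ((m + 1 + k).factorial))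
        = ∫ u in (0:ℝ)..y, g u := by
    intro y hy
    rw [poisson_tail m (Φ y)]
    have hsub := intervalIntegral.integral_comp_mul_deriv (f := Φ) (f' := L)
      (g := fun s => Real.exp (-s) * s ^ m / (m.factorial : ℝ)) (a := 0) (b := y)
      (fun x _ => hΦderiv x) hLcont.continuousOn
      (((Real.continuous_exp.comp continuous_neg).mul (continuous_pow m)).div_const _)
    rw [hΦ0] at hsub
    rw [← hsub]
    rfl
  -- the tsum terms, expressed through Φ
  set f : ℕ → Ω → ℝ := fun k ω =>
    Real.exp (-(Φ (Y ω))) * (Φ (Y ω)) ^ (m + 1 + k) / ((m + 1 + k).factorial) with hfdef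
  have hfcont : ∀ k, Continuous fun r : ℝ =>
      Real.exp (-(Φ r)) * (Φ r) ^ (m + 1 + k) / ((m + 1 + k).factorial : ℝ) := fun k =>
    ((Real.continuous_exp.comp hΦcont.neg).mul (hΦcont.pow _)).div_const _
  have hfmeas : ∀ k, Measurable (f k) := fun k => ((hfcont k).measurable).comp hYmeas
  have hfnn : ∀ k ω, 0 ≤ f k ω := by
    intro k ω
    have := hΦnn (Y ω) (hYnn ω)
    have := Real.exp_nonneg (-(Φ (Y ω)))
    positivity
  -- finiteness for integral_tsum
  have hfin : ∑' k : ℕ, ∫⁻ ω, ‖f k ω‖₊ ∂ℙ ≠ ∞ := by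
    change ∑' k : ℕ, ∫⁻ ω, ‖f k ω‖ₑ ∂ℙ ≠ ∞
    rw [← lintegral_tsum (fun k => ((hfmeas k).enorm).aemeasurable)]
    have hb : ∫⁻ ω, ∑' k : ℕ, (‖f k ω‖₊ : ℝ≥0∞) ∂ℙ ≤ 1 := by
      have : ∀ ω, ∑' k : ℕ, (‖f k ω‖₊ : ℝ≥0∞) ≤ 1 := by
        intro ω
        have heq : ∀ k : ℕ, (‖f k ω‖₊ : ℝ≥0∞) = ENNReal.ofReal (f k ω) := fun k =>
          Real.enorm_eq_ofReal (hfnn k ω)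
        calc ∑' k : ℕ, (‖f k ω‖₊ : ℝ≥0∞) = ∑' k : ℕ, ENNReal.ofReal (f k ω) :=
              tsum_congr heq
          _ = ENNReal.ofReal (∑' k : ℕ, f k ω) :=
              (ENNReal.ofReal_tsum_of_nonneg (fun k => hfnn k ω)
                (poisson_summable_tail m (Φ (Y ω)))).symm
          _ ≤ ENNReal.ofReal 1 := ENNReal.ofReal_le_ofReal
              (poisson_tail_le_one m (Φ (Y ω)) (hΦnn _ (hYnn ω)))
          _ = 1 := ENNReal.ofReal_one
      calc ∫⁻ ω, ∑' k : ℕ, (‖f k ω‖₊ : ℝ≥0∞) ∂ℙ ≤ ∫⁻ _, 1 ∂ℙ := lintegral_mono this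
        _ = 1 := by simp
    exact ne_top_of_le_ne_top ENNReal.one_ne_top hb
  -- G is the primitive of g
  set G : ℝ → ℝ := fun y => ∫ u in (0:ℝ)..y, g u with hGdef
  have hGcont : Continuous G := by
    rw [continuous_iff_continuousAt]
    intro x
    exact (intervalIntegral.integral_hasDerivAt_right (hgcont.intervalIntegrable 0 x)
      (hgcont.stronglyMeasurableAtFilter _ _) hgcont.continuousAt).continuousAt
  have hGnn : ∀ y, 0 ≤ y → 0 ≤ G y := fun y hy =>
    intervalIntegral.integral_nonneg hy (fun u hu => hgnn u hu.1)
  -- Step 1: LHS = ∫ G(Y)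
  have step1 : (∑' k : ℕ, ∫ ω, Real.exp (-(Λ (Y ω))) * (Λ (Y ω)) ^ (m + 1 + k) /
      ((m + 1 + k).factorial)) = ∫ ω, G (Y ω) := by
    have h1 : ∀ k : ℕ, (∫ ω, Real.exp (-(Λ (Y ω))) * (Λ (Y ω)) ^ (m + 1 + k) /
        ((m + 1 + k).factorial : ℝ)) = ∫ ω, f k ω := by
      intro k
      apply integral_congr_ae
      filter_upwards with ω
      rw [hfdef]
      simp only
      rw [hΦeq _ (hYnn ω)]
    rw [tsum_congr h1, ← integral_tsum (fun k => (hfmeas k).aestronglyMeasurable) hfin]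
    apply integral_congr_ae
    filter_upwards with ω
    exact key (Y ω) (hYnn ω)
  rw [step1]
  -- Step 2: both sides equal the same lintegral
  have hPmeas : Measurable fun u : ℝ => (ℙ {ω | u < Y ω}).toReal := by
    have h1 : Antitone fun u : ℝ => (ℙ {ω | u < Y ω}).toReal := by
      intro a b hab
      exact ENNReal.toReal_mono (measure_ne_top _ _)
        (measure_mono (fun ω h => lt_of_le_of_lt hab h))
    exact h1.measurable
  have hsY : ∀ u : ℝ, MeasurableSet {ω | u < Y ω} := fun u =>
    measurableSet_lt measurable_const hYmeas
  -- pointwise: ofReal (G y) as a lintegral over Ioi 0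
  have hstep : ∀ y : ℝ, 0 ≤ y → ENNReal.ofReal (G y)
      = ∫⁻ u in Ioi (0:ℝ), (Ioo 0 y).indicator (fun v => ENNReal.ofReal (g v)) u := by
    intro y hy
    rw [lintegral_indicator measurableSet_Ioo _, Measure.restrict_restrict measurableSet_Ioo,
      inter_eq_left.mpr (fun x hx => hx.1), MeasureTheory.restrict_Ioo_eq_restrict_Ioc]
    rw [← ofReal_integral_eq_lintegral_ofReal (hgcont.integrableOn_Ioc)
      ((ae_restrict_iff' measurableSet_Ioc).mpr (ae_of_all _ fun u hu => hgnn u hu.1.le))]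
    rw [hGdef]
    simp only
    rw [intervalIntegral.integral_of_le hy]
  -- the common lintegral value
  have hprod : AEMeasurable (fun p : Ω × ℝ =>
      (Ioo (0:ℝ) (Y p.1)).indicator (fun v => ENNReal.ofReal (g v)) p.2)
      (Measure.prod ℙ (volume.restrict (Ioi (0:ℝ)))) := by
    have hs : MeasurableSet {p : Ω × ℝ | 0 < p.2 ∧ p.2 < Y p.1} := by
      apply MeasurableSet.inter
      · exact measurable_snd measurableSet_Ioi
      · exact measurableSet_lt measurable_snd (hYmeas.comp measurable_fst)
    have heq : (fun p : Ω × ℝ =>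
        (Ioo (0:ℝ) (Y p.1)).indicator (fun v => ENNReal.ofReal (g v)) p.2)
        = Set.indicator {p : Ω × ℝ | 0 < p.2 ∧ p.2 < Y p.1}
          (fun p => ENNReal.ofReal (g p.2)) := by
      funext p
      by_cases h : 0 < p.2 ∧ p.2 < Y p.1
      · rw [Set.indicator_of_mem (show p.2 ∈ Ioo 0 (Y p.1) from h),
          Set.indicator_of_mem (show p ∈ {p : Ω × ℝ | 0 < p.2 ∧ p.2 < Y p.1} from h)]
      · rw [Set.indicator_of_notMem (show p.2 ∉ Ioo 0 (Y p.1) from h),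
          Set.indicator_of_notMem (show p ∉ {p : Ω × ℝ | 0 < p.2 ∧ p.2 < Y p.1} from h)]
    rw [heq]
    exact ((ENNReal.measurable_ofReal.comp (hgcont.measurable.comp measurable_snd)).indicator
      hs).aemeasurable
  have hswap : ∫⁻ ω, ENNReal.ofReal (G (Y ω)) ∂ℙ
      = ∫⁻ u in Ioi (0:ℝ), ENNReal.ofReal (g u) * ℙ {ω | u < Y ω} := by
    calc ∫⁻ ω, ENNReal.ofReal (G (Y ω)) ∂ℙ
        = ∫⁻ ω, ∫⁻ u in Ioi (0:ℝ),
            (Ioo 0 (Y ω)).indicator (fun v => ENNReal.ofReal (g v)) u ∂ℙ := by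
          apply lintegral_congr_ae
          filter_upwards with ω
          exact hstep (Y ω) (hYnn ω)
      _ = ∫⁻ u in Ioi (0:ℝ), ∫⁻ ω,
            (Ioo 0 (Y ω)).indicator (fun v => ENNReal.ofReal (g v)) u ∂ℙ :=
          lintegral_lintegral_swap hprod
      _ = ∫⁻ u in Ioi (0:ℝ), ENNReal.ofReal (g u) * ℙ {ω | u < Y ω} := by
          apply setLIntegral_congr_fun measurableSet_Ioi
          intro u hu
          beta_reduce
          have : ∀ ω, (Ioo 0 (Y ω)).indicator (fun v => ENNReal.ofReal (g v)) u
              = {ω' | u < Y ω'}.indicator (fun _ => ENNReal.ofReal (g u)) ω := by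
            intro ω
            by_cases h : u < Y ω
            · rw [Set.indicator_of_mem (show u ∈ Ioo 0 (Y ω) from ⟨hu, h⟩),
                Set.indicator_of_mem (show ω ∈ {ω' | u < Y ω'} from h)]
            · rw [Set.indicator_of_notMem
                (show u ∉ Ioo 0 (Y ω) from fun hc => h hc.2),
                Set.indicator_of_notMem (show ω ∉ {ω' | u < Y ω'} from h)]
          rw [lintegral_congr this, lintegral_indicator_const (hsY u)]
  -- LHS as toReal of lintegral
  have hLHS : ∫ ω, G (Y ω) ∂ℙ
      = (∫⁻ u in Ioi (0:ℝ), ENNReal.ofReal (g u) * ℙ {ω | u < Y ω}).toReal := by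
    rw [integral_eq_lintegral_of_nonneg_ae (ae_of_all _ fun ω => hGnn (Y ω) (hYnn ω))
      ((hGcont.measurable.comp hYmeas).aestronglyMeasurable), hswap]
  -- RHS as toReal of the same lintegral
  have hRHS : (∫ u in Set.Ioi (0 : ℝ), (ℙ {ω | u < Y ω}).toReal *
        (lam u * Real.exp (-(Λ u)) * (Λ u) ^ m / (Nat.factorial m)))
      = (∫⁻ u in Ioi (0:ℝ), ENNReal.ofReal (g u) * ℙ {ω | u < Y ω}).toReal := by
    have hgeq : ∀ u : ℝ, 0 < u →
        lam u * Real.exp (-(Λ u)) * (Λ u) ^ m / (Nat.factorial m : ℝ) = g u := by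
      intro u hu
      rw [hgdef]
      simp only
      rw [← hΦeq u hu.le, hLdef]
      simp only [max_eq_left hu.le]
      ring
    have hnn' : 0 ≤ᵐ[volume.restrict (Ioi (0:ℝ))] fun u =>
        (ℙ {ω | u < Y ω}).toReal *
          (lam u * Real.exp (-(Λ u)) * (Λ u) ^ m / (Nat.factorial m)) := by
      filter_upwards [self_mem_ae_restrict measurableSet_Ioi] with u hu
      have h1 : (0:ℝ) ≤ (ℙ {ω | u < Y ω}).toReal := ENNReal.toReal_nonneg
      have h2 := hgnn u (le_of_lt hu)
      have := mul_nonneg h1 h2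
      rw [hgeq u hu]
      exact this
    have hmeas' : AEStronglyMeasurable (fun u =>
        (ℙ {ω | u < Y ω}).toReal *
          (lam u * Real.exp (-(Λ u)) * (Λ u) ^ m / (Nat.factorial m)))
        (volume.restrict (Ioi (0:ℝ))) := by
      apply AEStronglyMeasurable.congr
        ((hPmeas.mul hgcont.measurable).aestronglyMeasurable)
      rw [Filter.EventuallyEq, ae_restrict_iff' measurableSet_Ioi]
      apply ae_of_all
      intro u hu
      rw [hgeq u hu]; rfl
    rw [integral_eq_lintegral_of_nonneg_ae hnn' hmeas']
    congr 1
    apply setLIntegral_congr_fun measurableSet_Ioi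
    intro u hu
    beta_reduce
    rw [hgeq u hu, ENNReal.ofReal_mul ENNReal.toReal_nonneg,
      ENNReal.ofReal_toReal (measure_ne_top _ _), mul_comm]
  rw [hLHS, hRHS]
end

section
/- Let 0 < α < 1, let λ : [0,∞) → [0,∞) be bounded and continuous, Λ(s,t) = ∫_s^t λ(u) du, and fix v ≥ 0, y ∈ ℝ and r > 0. Write z = e^{iy} − 1 ∈ ℂ. Then ∫_0^∞ exp( Λ(v, u+v) z ) r^{α-1} e^{-u r^α} du = r^{-α} [ r^{α-1} + z ∫_0^∞ λ(u+v) exp( Λ(v, u+v) z ) r^{α-1} e^{-u r^α} du ], where both integrals converge absolutely. -/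
open MeasureTheory Set Filter Topology

/-- integration-by-parts identity in Laplace space, the central
computation in the proof of the governing equation of the FNPP. -/
theorem fnpp_laplace_integration_by_parts
    (α : ℝ) (hα : α ∈ Set.Ioo (0 : ℝ) 1)
    (lam : ℝ → ℝ) (hcont : ContinuousOn lam (Ici 0))
    (hnn : ∀ u : ℝ, 0 ≤ u → 0 ≤ lam u)
    (hbdd : ∃ M : ℝ, ∀ u : ℝ, 0 ≤ u → lam u ≤ M)
    (Λ : ℝ → ℝ → ℝ) (hΛ : ∀ s t : ℝ, Λ s t = ∫ u in s..t, lam u)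
    (v : ℝ) (hv : 0 ≤ v) (y : ℝ) (r : ℝ) (hr : 0 < r)
    (z : ℂ) (hz : z = Complex.exp (y * Complex.I) - 1) :
    IntegrableOn (fun u : ℝ =>
        Complex.exp ((Λ v (u + v) : ℂ) * z) *
          ((r ^ (α - 1) * Real.exp (-(u * r ^ α)) : ℝ) : ℂ)) (Set.Ioi 0) ∧
    IntegrableOn (fun u : ℝ =>
        (lam (u + v) : ℂ) * Complex.exp ((Λ v (u + v) : ℂ) * z) *
          ((r ^ (α - 1) * Real.exp (-(u * r ^ α)) : ℝ) : ℂ)) (Set.Ioi 0) ∧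
    (∫ u in Set.Ioi (0 : ℝ),
        Complex.exp ((Λ v (u + v) : ℂ) * z) *
          ((r ^ (α - 1) * Real.exp (-(u * r ^ α)) : ℝ) : ℂ)) =
      ((r ^ (-α) : ℝ) : ℂ) *
        (((r ^ (α - 1) : ℝ) : ℂ) +
          z * ∫ u in Set.Ioi (0 : ℝ),
            (lam (u + v) : ℂ) * Complex.exp ((Λ v (u + v) : ℂ) * z) *
              ((r ^ (α - 1) * Real.exp (-(u * r ^ α)) : ℝ) : ℂ)) := by
  obtain ⟨hα0, hα1⟩ := hα
  obtain ⟨M, hM⟩ := hbdd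
  set β : ℝ := r ^ α with hβdef
  have hβpos : 0 < β := Real.rpow_pos_of_pos hr α
  set c : ℝ := r ^ (α - 1) with hcdef
  have hcpos : 0 < c := Real.rpow_pos_of_pos hr _
  set P : ℝ → ℝ := fun u => ∫ x in v..(u + v), lam x with hPdef
  have hΛP : ∀ u : ℝ, Λ v (u + v) = P u := fun u => hΛ v (u + v)
  set E : ℝ → ℝ := fun u => Real.exp (-(u * β)) with hEdef
  set F : ℝ → ℂ := fun u => Complex.exp ((P u : ℂ) * z) with hFdef
  -- nonnegativity of P
  have hlamInt : ∀ b : ℝ, v ≤ b → IntervalIntegrable lam volume v b := by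
    intro b hb
    apply ContinuousOn.intervalIntegrable
    apply hcont.mono
    rw [uIcc_of_le hb]
    intro x hx
    exact le_trans hv hx.1
  have hPnn : ∀ u : ℝ, 0 ≤ u → 0 ≤ P u := by
    intro u hu
    apply intervalIntegral.integral_nonneg (by linarith)
    intro x hx
    exact hnn x (le_trans hv hx.1)
  -- real part of z
  have hzre : z.re ≤ 0 := by
    rw [hz]
    simp [Complex.exp_ofReal_mul_I_re]
    exact Real.cos_le_one y
  have hFnorm : ∀ u : ℝ, 0 ≤ u → ‖F u‖ ≤ 1 := by
    intro u hu
    rw [hFdef]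
    simp only [Complex.norm_exp]
    rw [Complex.re_ofReal_mul]
    have : P u * z.re ≤ 0 := mul_nonpos_of_nonneg_of_nonpos (hPnn u hu) hzre
    simpa using Real.exp_le_one_iff.mpr this
  -- derivative of P on Ioi 0
  have hPderiv : ∀ u ∈ Ioi (0 : ℝ), HasDerivAt P (lam (u + v)) u := by
    intro u hu
    have huv : 0 < u + v := by have := hu.out; linarith
    have hmeas : StronglyMeasurableAtFilter lam (𝓝 (u + v)) volume :=
      (hcont.mono (Ioi_subset_Ici le_rfl : Ioi (0:ℝ) ⊆ Ici 0)).stronglyMeasurableAtFilter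
        isOpen_Ioi (u + v) huv
    have hca : ContinuousAt lam (u + v) :=
      hcont.continuousAt (Ici_mem_nhds huv)
    have h1 : HasDerivAt (fun t => ∫ x in v..t, lam x) (lam (u + v)) (u + v) :=
      intervalIntegral.integral_hasDerivAt_right (hlamInt (u + v) (by linarith [hu.out]))
        hmeas hca
    have h2 := h1.comp u ((hasDerivAt_id u).add_const v)
    simp only [id, mul_one] at h2
    exact h2
  -- derivative of F on Ioi 0
  have hFderiv : ∀ u ∈ Ioi (0 : ℝ), HasDerivAt F ((lam (u + v) : ℂ) * z * F u) u := by
    intro u hu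
    have := (((hPderiv u hu).ofReal_comp).mul_const z).cexp
    rw [hFdef]
    convert this using 1
    ring
  -- derivative of E (as complex) at any u
  have hEderiv : ∀ u : ℝ, HasDerivAt (fun u => ((E u : ℝ) : ℂ)) ((-β * E u : ℝ) : ℂ) u := by
    intro u
    have h0 : HasDerivAt (fun u : ℝ => -(u * β)) (-β) u := by
      have h := ((hasDerivAt_id u).mul_const β).neg
      simp only [id, one_mul] at h
      exact h
    have h1 : HasDerivAt E (Real.exp (-(u * β)) * (-β)) u := h0.exp
    have := h1.ofReal_comp
    convert this using 1
    norm_cast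
    simp only [hEdef]
    ring
  -- G and its derivative
  set G : ℝ → ℂ := fun u => F u * ((E u : ℝ) : ℂ) with hGdef
  set g' : ℝ → ℂ := fun u => z * ((lam (u + v) : ℂ) * F u * ((E u : ℝ) : ℂ)) -
      (β : ℂ) * (F u * ((E u : ℝ) : ℂ)) with hg'def
  have hGderiv : ∀ u ∈ Ioi (0 : ℝ), HasDerivAt G (g' u) u := by
    intro u hu
    have := (hFderiv u hu).mul (hEderiv u)
    rw [hGdef, hg'def]
    refine HasDerivAt.congr_deriv this ?_
    push_cast
    ring
  -- continuity / measurability on Ioi 0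
  have hEC : Continuous (fun u : ℝ => ((E u : ℝ) : ℂ)) := by
    simp only [hEdef]; fun_prop
  have hFE_cont : ContinuousOn (fun u => F u * ((E u : ℝ) : ℂ)) (Ioi 0) := by
    intro u hu
    exact ((hFderiv u hu).continuousAt.continuousWithinAt).mul hEC.continuousWithinAt
  have hlam_cont : ContinuousOn (fun u : ℝ => lam (u + v)) (Ioi 0) := by
    have : ContinuousOn (lam ∘ fun u : ℝ => u + v) (Ioi 0) :=
      hcont.comp (continuous_add_right v).continuousOn
        (fun x hx => by simp only [mem_Ici]; have := hx.out; linarith)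
    exact this
  -- the basic integrable bound
  have hEint : IntegrableOn E (Ioi 0) := by
    have := exp_neg_integrableOn_Ioi 0 hβpos
    apply this.congr_fun _ measurableSet_Ioi
    intro x _
    rw [hEdef]
    ring_nf
  have hI1 : IntegrableOn (fun u => F u * ((E u : ℝ) : ℂ)) (Ioi 0) := by
    apply Integrable.mono' hEint (hFE_cont.aestronglyMeasurable measurableSet_Ioi)
    rw [ae_restrict_iff' measurableSet_Ioi]
    filter_upwards with u hu
    rw [norm_mul]
    have h1 : ‖((E u : ℝ) : ℂ)‖ = E u := by
      rw [Complex.norm_real, Real.norm_eq_abs, abs_of_pos (Real.exp_pos _)]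
    rw [h1]
    calc ‖F u‖ * E u ≤ 1 * E u := by
          apply mul_le_mul_of_nonneg_right (hFnorm u hu.out.le) (Real.exp_pos _).le
      _ = E u := one_mul _
  have hM0 : 0 ≤ M := le_trans (hnn 0 le_rfl) (hM 0 le_rfl)
  have hI2 : IntegrableOn (fun u => (lam (u + v) : ℂ) * F u * ((E u : ℝ) : ℂ)) (Ioi 0) := by
    have hmeasI2 : ContinuousOn (fun u : ℝ => (lam (u + v) : ℂ) * F u * ((E u : ℝ) : ℂ))
        (Ioi 0) := by
      intro u hu
      exact ((Complex.continuous_ofReal.continuousAt.comp_continuousWithinAt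
        (hlam_cont u hu)).mul ((hFderiv u hu).continuousAt.continuousWithinAt)).mul
        hEC.continuousWithinAt
    apply Integrable.mono' (hEint.const_mul M)
      (hmeasI2.aestronglyMeasurable measurableSet_Ioi)
    rw [ae_restrict_iff' measurableSet_Ioi]
    filter_upwards with u hu
    have huv : (0:ℝ) ≤ u + v := by have := hu.out; linarith
    rw [norm_mul, norm_mul]
    have h1 : ‖((E u : ℝ) : ℂ)‖ = E u := by
      rw [Complex.norm_real, Real.norm_eq_abs, abs_of_pos (Real.exp_pos _)]
    have h2 : ‖((lam (u + v) : ℝ) : ℂ)‖ ≤ M := by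
      rw [Complex.norm_real, Real.norm_eq_abs, abs_of_nonneg (hnn _ huv)]
      exact hM _ huv
    rw [h1]
    calc ‖((lam (u + v) : ℝ) : ℂ)‖ * ‖F u‖ * E u
        ≤ M * 1 * E u := by
          apply mul_le_mul_of_nonneg_right _ (Real.exp_pos _).le
          exact mul_le_mul h2 (hFnorm u hu.out.le) (norm_nonneg _) hM0
      _ = M * E u := by ring
  -- integrability of g'
  have hg'int : IntegrableOn g' (Ioi 0) := by
    rw [hg'def]
    exact (hI2.const_mul z).sub (hI1.const_mul (β : ℂ))
  -- continuity of G at 0 from the right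
  have hPcw : ContinuousWithinAt P (Ici 0) 0 := by
    have hprim : ContinuousOn (fun t => ∫ x in v..t, lam x) (Icc v (v + 1)) := by
      have := intervalIntegral.continuousOn_primitive_interval'
        (μ := volume) (hlamInt (v + 1) (by linarith)) (left_mem_uIcc)
      rwa [uIcc_of_le (by linarith : v ≤ v + 1)] at this
    have hmaps : MapsTo (fun u : ℝ => u + v) (Icc 0 1) (Icc v (v + 1)) := by
      intro x hx
      simp only [mem_Icc] at hx ⊢
      constructor <;> linarith [hx.1, hx.2]
    have hg : ContinuousWithinAt (fun t => ∫ x in v..t, lam x) (Icc v (v + 1))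
        ((0 : ℝ) + v) := by
      rw [zero_add]
      exact hprim.continuousWithinAt (mem_Icc.mpr ⟨le_rfl, by linarith⟩)
    have hcomp : ContinuousWithinAt P (Icc 0 1) 0 :=
      ContinuousWithinAt.comp (f := fun u : ℝ => u + v)
        (g := fun t => ∫ x in v..t, lam x) (x := (0 : ℝ)) hg
        (continuous_add_right v).continuousWithinAt hmaps
    apply hcomp.mono_of_mem_nhdsWithin
    have : Ici (0:ℝ) ∩ Iic 1 ∈ nhdsWithin (0:ℝ) (Ici 0) :=
      inter_mem_nhdsWithin _ (Iic_mem_nhds one_pos)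
    rwa [Ici_inter_Iic] at this
  have hGcw : ContinuousWithinAt G (Ici 0) 0 := by
    rw [hGdef, hFdef]
    apply ContinuousWithinAt.mul
    · exact Complex.continuous_exp.continuousAt.comp_continuousWithinAt
        ((Complex.continuous_ofReal.continuousAt.comp_continuousWithinAt hPcw).mul
          continuousWithinAt_const)
    · exact hEC.continuousWithinAt
  -- G tends to 0 at infinity
  have hGtend : Filter.Tendsto G Filter.atTop (nhds 0) := by
    apply squeeze_zero_norm' (a := E)
    · filter_upwards [Filter.eventually_ge_atTop (0:ℝ)] with u hu
      rw [hGdef]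
      simp only [norm_mul]
      have h1 : ‖((E u : ℝ) : ℂ)‖ = E u := by
        rw [Complex.norm_real, Real.norm_eq_abs, abs_of_pos (Real.exp_pos _)]
      rw [h1]
      calc ‖F u‖ * E u ≤ 1 * E u :=
            mul_le_mul_of_nonneg_right (hFnorm u hu) (Real.exp_pos _).le
        _ = E u := one_mul _
    · have : Filter.Tendsto (fun u : ℝ => u * β) Filter.atTop Filter.atTop :=
        Filter.Tendsto.atTop_mul_const hβpos Filter.tendsto_id
      exact Real.tendsto_exp_neg_atTop_nhds_zero.comp this
  -- FTC on (0, ∞)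
  have hFTC : ∫ u in Ioi (0:ℝ), g' u = 0 - G 0 :=
    MeasureTheory.integral_Ioi_of_hasDerivAt_of_tendsto hGcw hGderiv hg'int hGtend
  have hG0 : G 0 = 1 := by
    rw [hGdef, hFdef, hEdef, hPdef]
    simp
  rw [hG0] at hFTC
  -- name the two integrals
  set I1 : ℂ := ∫ u in Ioi (0:ℝ), F u * ((E u : ℝ) : ℂ) with hI1def
  set I2 : ℂ := ∫ u in Ioi (0:ℝ), (lam (u + v) : ℂ) * F u * ((E u : ℝ) : ℂ) with hI2def
  have hsplit : ∫ u in Ioi (0:ℝ), g' u = z * I2 - (β : ℂ) * I1 := by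
    rw [hg'def]
    rw [MeasureTheory.integral_sub (hI2.const_mul z) (hI1.const_mul (β : ℂ))]
    rw [MeasureTheory.integral_const_mul, MeasureTheory.integral_const_mul]
  have hkey : z * I2 - (β : ℂ) * I1 = -1 := by
    rw [← hsplit, hFTC]; ring
  -- identify the integrands in the goal
  have key_eq1 : (fun u : ℝ => Complex.exp ((Λ v (u + v) : ℂ) * z) *
      ((c * Real.exp (-(u * β)) : ℝ) : ℂ)) =
      fun u => (c : ℂ) * (F u * ((E u : ℝ) : ℂ)) := by
    funext u
    rw [hΛP, hFdef, hEdef]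
    push_cast
    ring
  have key_eq2 : (fun u : ℝ => (lam (u + v) : ℂ) * Complex.exp ((Λ v (u + v) : ℂ) * z) *
      ((c * Real.exp (-(u * β)) : ℝ) : ℂ)) =
      fun u => (c : ℂ) * ((lam (u + v) : ℂ) * F u * ((E u : ℝ) : ℂ)) := by
    funext u
    rw [hΛP, hFdef, hEdef]
    push_cast
    ring
  refine ⟨?_, ?_, ?_⟩
  · rw [key_eq1]; exact hI1.const_mul _
  · rw [key_eq2]; exact hI2.const_mul _
  · rw [key_eq1, key_eq2, MeasureTheory.integral_const_mul, MeasureTheory.integral_const_mul]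
    rw [← hI1def, ← hI2def]
    have hβC : ((β : ℝ) : ℂ) ≠ 0 := by
      exact_mod_cast hβpos.ne'
    have hrneg : ((r ^ (-α) : ℝ) : ℂ) = ((β : ℝ) : ℂ)⁻¹ := by
      rw [hβdef, ← Complex.ofReal_inv, ← Real.rpow_neg hr.le]
    rw [hrneg]
    have hI1eq : I1 = ((β : ℝ) : ℂ)⁻¹ * (1 + z * I2) := by
      field_simp
      linear_combination -hkey
    rw [hI1eq]
    field_simp
end
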